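/- For every natural number k, maxMdepth(bestCase(k)) = k; that is, the multiway-tree depth of the best-case number of representation size k is exactly k. -/

import Mathlib

/-- The pairing function `c`. -/
def c (i j : ℕ) : ℕ := if Odd j then 2 ^ (i + 1) * j else 2 ^ (i + 1) * (j + 1) - 1

/-- The inverse of `c` on positive naturals (returns `(0,0)` at `0`). -/
def c' (n : ℕ) : ℕ × ℕ :=
  (padicValNat 2 (n + n % 2) - 1, (n + n % 2) / 2 ^ padicValNat 2 (n + n % 2) - n % 2)

lemma c'_fst_lt {n : ℕ} (hn : 0 < n) : (c' n).1 < n := by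
  have hm : 0 < n + n % 2 := by omega
  have hdvd : (2 : ℕ) ^ padicValNat 2 (n + n % 2) ∣ (n + n % 2) := pow_padicValNat_dvd
  have hle : (2 : ℕ) ^ padicValNat 2 (n + n % 2) ≤ n + n % 2 := Nat.le_of_dvd hm hdvd
  have hlt : padicValNat 2 (n + n % 2) < 2 ^ padicValNat 2 (n + n % 2) := Nat.lt_two_pow_self
  simp only [c']
  generalize hv : padicValNat 2 (n + n % 2) = v at *
  generalize hp : (2 : ℕ) ^ v = p at *
  omega

lemma c'_snd_lt {n : ℕ} (hn : 0 < n) : (c' n).2 < n := by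
  have hm : 0 < n + n % 2 := by omega
  have h2 : (2 : ℕ) ∣ (n + n % 2) := by omega
  have hv : 1 ≤ padicValNat 2 (n + n % 2) := one_le_padicValNat_of_dvd hm.ne' h2
  have h2le : (2 : ℕ) ≤ 2 ^ padicValNat 2 (n + n % 2) := by
    calc (2:ℕ) = 2 ^ 1 := (pow_one 2).symm
    _ ≤ 2 ^ padicValNat 2 (n + n % 2) := Nat.pow_le_pow_right (by norm_num) hv
  have hle : (n + n % 2) / 2 ^ padicValNat 2 (n + n % 2) ≤ (n + n % 2) / 2 :=
    Nat.div_le_div_left h2le (by norm_num)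
  simp only [c']
  generalize hq : (n + n % 2) / 2 ^ padicValNat 2 (n + n % 2) = q at *
  omega

lemma c'_fst_lt_of_lt {m n : ℕ} (h : m < n) : (c' m).1 < n := by
  rcases Nat.eq_zero_or_pos m with rfl | hm
  · simp [c']; omega
  · exact lt_trans (c'_fst_lt hm) h

lemma c'_snd_lt_of_lt {m n : ℕ} (h : m < n) : (c' m).2 < n := by
  rcases Nat.eq_zero_or_pos m with rfl | hm
  · simp [c']; omega
  · exact lt_trans (c'_snd_lt hm) h

def maxMdepth : ℕ → ℕ
  | 0 => 0
  | n + 1 => max (1 + maxMdepth (c' (n + 1)).1) (maxMdepth (c' (n + 1)).2)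
  decreasing_by
  · exact c'_fst_lt (Nat.succ_pos n)
  · exact c'_snd_lt (Nat.succ_pos n)

/-- best case: iterated `x ↦ c x 0` (towers of exponents). -/
def bestCase (k : ℕ) : ℕ := (fun x => c x 0)^[k] 0

/-- worst case: iterated `x ↦ c 0 x`. -/
def worstCase (k : ℕ) : ℕ := (fun x => c 0 x)^[k] 0

lemma maxMdepth_eq {n : ℕ} (hn : 0 < n) :
    maxMdepth n = max (1 + maxMdepth (c' n).1) (maxMdepth (c' n).2) := by
  cases n with
  | zero => omega
  | succ m => rw [maxMdepth]

lemma c_i_zero (i : ℕ) : c i 0 = 2 ^ (i + 1) - 1 := by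
  simp [c]

lemma c'_c_zero (i : ℕ) : c' (c i 0) = (i, 0) := by
  have hp : (1 : ℕ) ≤ 2 ^ (i + 1) := Nat.one_le_two_pow
  have hmod : (2 ^ (i + 1) - 1) % 2 = 1 := by
    have : 2 ^ (i + 1) % 2 = 0 := by
      simp [Nat.pow_succ, Nat.mul_mod]
    omega
  have hsum : 2 ^ (i + 1) - 1 + (2 ^ (i + 1) - 1) % 2 = 2 ^ (i + 1) := by omega
  rw [c_i_zero, c', hsum, hmod]
  have hval : padicValNat 2 (2 ^ (i + 1)) = i + 1 := by
    simp [padicValNat.prime_pow]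
  rw [hval]
  simp

theorem maxMdepth_bestCase (k : ℕ) : maxMdepth (bestCase k) = k := by
  induction k with
  | zero => simp [bestCase, maxMdepth]
  | succ k ih =>
    have hstep : bestCase (k + 1) = c (bestCase k) 0 := by
      simp [bestCase, Function.iterate_succ_apply']
    have hpos : 0 < c (bestCase k) 0 := by
      rw [c_i_zero]
      have : (2 : ℕ) ^ (bestCase k + 1) ≥ 2 := by
        calc (2:ℕ) = 2 ^ 1 := rfl
        _ ≤ _ := Nat.pow_le_pow_right (by norm_num) (by omega)
      omega
    rw [hstep, maxMdepth_eq hpos, c'_c_zero]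
    simp [ih, maxMdepth]; omega
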